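/- If an algebra A has almost permutable congruences (i.e., a ∨ b = (a∘b) ∪ (b∘a) for all congruences a, b of A), then the canonical distance Θ_A : A × A → Con_c(A), (x,y) ↦ Θ_A(x,y), is a V-distance of type 3/2; consequently the compact congruence semilattice Con_c(A) satisfies WURP=(e) for every e ∈ Con_c(A). -/
import Mathlib


universe u

section UniversalAlgebra

variable {ι A : Type*}

/-- `r` is a congruence of the algebra `A` with operations `ops i` of arity
`F i`. -/
def IsCong (F : ι → ℕ) (ops : ∀ i, (Fin (F i) → A) → A) (r : A → A → Prop) : Prop :=
  Equivalence r ∧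
    ∀ i (f g : Fin (F i) → A), (∀ k, r (f k) (g k)) → r (ops i f) (ops i g)

/-- The congruence generated by a binary relation `s`. -/
def congGen (F : ι → ℕ) (ops : ∀ i, (Fin (F i) → A) → A) (s : A → A → Prop) :
    A → A → Prop :=
  fun u v => ∀ r : A → A → Prop, IsCong F ops r → (∀ p q, s p q → r p q) → r u v

/-- The principal congruence `Θ(x,y)`. -/
def theta (F : ι → ℕ) (ops : ∀ i, (Fin (F i) → A) → A) (x y : A) : A → A → Prop :=
  congGen F ops fun p q => p = x ∧ q = y

/-- The join of two congruences in the congruence lattice. -/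
def congSup (F : ι → ℕ) (ops : ∀ i, (Fin (F i) → A) → A) (a b : A → A → Prop) :
    A → A → Prop :=
  congGen F ops fun p q => a p q ∨ b p q

/-- A compact (= finitely generated) congruence. -/
def FGCong (F : ι → ℕ) (ops : ∀ i, (Fin (F i) → A) → A) (r : A → A → Prop) : Prop :=
  ∃ l : List (A × A), r = congGen F ops fun p q => (p, q) ∈ l


section Helpers

variable (F : ι → ℕ) (ops : ∀ i, (Fin (F i) → A) → A)

theorem congGen_isCong (s : A → A → Prop) : IsCong F ops (congGen F ops s) := by
  constructor
  · refine ⟨fun u r hr _ => hr.1.refl u, fun h r hr hs => hr.1.symm (h r hr hs),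
      fun h1 h2 r hr hs => hr.1.trans (h1 r hr hs) (h2 r hr hs)⟩
  · intro i f g hfg r hr hs
    exact hr.2 i f g (fun k => hfg k r hr hs)

theorem le_congGen (s : A → A → Prop) (p q : A) (h : s p q) : congGen F ops s p q :=
  fun r _ hs => hs p q h

theorem congGen_le (s : A → A → Prop) (r : A → A → Prop) (hr : IsCong F ops r)
    (hs : ∀ p q, s p q → r p q) : ∀ u v, congGen F ops s u v → r u v :=
  fun _ _ h => h r hr hs

theorem theta_self (x y : A) : theta F ops x y x y :=
  le_congGen F ops _ x y ⟨rfl, rfl⟩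

theorem theta_le (x y : A) (r : A → A → Prop) (hr : IsCong F ops r) (hxy : r x y) :
    ∀ u v, theta F ops x y u v → r u v := by
  refine congGen_le F ops _ r hr ?_
  rintro p q ⟨rfl, rfl⟩
  exact hxy

theorem congSup_isCong (a b : A → A → Prop) : IsCong F ops (congSup F ops a b) :=
  congGen_isCong F ops _

theorem left_le_congSup (a b : A → A → Prop) (p q : A) (h : a p q) :
    congSup F ops a b p q :=
  le_congGen F ops _ p q (Or.inl h)

theorem right_le_congSup (a b : A → A → Prop) (p q : A) (h : b p q) :
    congSup F ops a b p q :=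
  le_congGen F ops _ p q (Or.inr h)

theorem fg_isCong {r : A → A → Prop} (h : FGCong F ops r) : IsCong F ops r := by
  obtain ⟨l, rfl⟩ := h
  exact congGen_isCong F ops _

end Helpers

/-- If an algebra `A` has almost permutable congruences, i.e.
`a ⊔ b = (a ∘ b) ∪ (b ∘ a)` for all congruences `a`, `b`, then the canonical
distance `(x, y) ↦ Θ_A(x,y)` is a V-distance of type 3/2, and consequently the
semilattice `Con_c A` of compact congruences satisfies `WURP⁼(e)` for every
compact congruence `e`. -/
theorem wurp_of_almost_permutable (F : ι → ℕ) (ops : ∀ i, (Fin (F i) → A) → A)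
    (halmost : ∀ a b : A → A → Prop, IsCong F ops a → IsCong F ops b →
      ∀ x y : A, congSup F ops a b x y ↔
        ((∃ z, a x z ∧ b z y) ∨ (∃ z, b x z ∧ a z y))) :
    -- Θ is a V-distance of type 3/2:
    (∀ x y : A, ∀ a b : A → A → Prop, FGCong F ops a → FGCong F ops b →
      (∀ u v, theta F ops x y u v → congSup F ops a b u v) →
      ∃ z : A,
        ((∀ u v, theta F ops x z u v → a u v) ∧ (∀ u v, theta F ops z y u v → b u v)) ∨
        ((∀ u v, theta F ops x z u v → b u v) ∧ (∀ u v, theta F ops z y u v → a u v))) ∧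
    -- Con_c A satisfies WURP⁼(e) for every compact congruence e:
    (∀ e : A → A → Prop, FGCong F ops e →
      ∃ m : ℕ, 0 < m ∧
        ∀ (I : Type u) (a b : I → (A → A → Prop)),
          (∀ i, FGCong F ops (a i)) → (∀ i, FGCong F ops (b i)) →
          (∀ i, ∀ u v, e u v → congSup F ops (a i) (b i) u v) →
          ∃ (J : Fin m → Set I) (c : I → I → (A → A → Prop)),
            (∀ i j, FGCong F ops (c i j)) ∧
            (∀ i : I, ∃ w : Fin m, i ∈ J w) ∧
            (∀ w : Fin m, ∀ i ∈ J w, ∀ j ∈ J w,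
              (∀ u v, c i j u v → congSup F ops (a i) (a j) u v) ∧
              (∀ u v, c i j u v → congSup F ops (b i) (b j) u v) ∧
              (∀ u v, e u v →
                congSup F ops (congSup F ops (a j) (b i)) (c i j) u v)) ∧
            (∀ i j k : I, ∀ u v, c i k u v →
              congSup F ops (c i j) (c j k) u v)) := by
  have main : ∀ x y : A, ∀ a b : A → A → Prop, FGCong F ops a → FGCong F ops b →
      (∀ u v, theta F ops x y u v → congSup F ops a b u v) →
      ∃ z : A,
        ((∀ u v, theta F ops x z u v → a u v) ∧ (∀ u v, theta F ops z y u v → b u v)) ∨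
        ((∀ u v, theta F ops x z u v → b u v) ∧ (∀ u v, theta F ops z y u v → a u v)) := by
    intro x y a b ha hb hsub
    have haC := fg_isCong F ops ha
    have hbC := fg_isCong F ops hb
    have hxy : congSup F ops a b x y := hsub x y (theta_self F ops x y)
    rcases (halmost a b haC hbC x y).mp hxy with ⟨z, h1, h2⟩ | ⟨z, h1, h2⟩
    · exact ⟨z, Or.inl ⟨theta_le F ops x z a haC h1, theta_le F ops z y b hbC h2⟩⟩
    · exact ⟨z, Or.inr ⟨theta_le F ops x z b hbC h1, theta_le F ops z y a haC h2⟩⟩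
  refine ⟨main, ?_⟩
  intro e he
  obtain ⟨l, rfl⟩ := he
  refine ⟨Fintype.card (Fin l.length → Bool), Fintype.card_pos, ?_⟩
  intro I a b ha hb hle
  -- choose a witness and an orientation for each i and each generator pair
  have key : ∀ (i : I) (t : Fin l.length), ∃ (z : A) (o : Bool),
      (o = true ∧ a i (l.get t).1 z ∧ b i z (l.get t).2) ∨
      (o = false ∧ b i (l.get t).1 z ∧ a i z (l.get t).2) := by
    intro i t
    have hmem : ((l.get t).1, (l.get t).2) ∈ l := by
      simpa using List.get_mem l t
    have hel : congGen F ops (fun p q => (p, q) ∈ l) (l.get t).1 (l.get t).2 :=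
      le_congGen F ops _ _ _ hmem
    have hsup := hle i _ _ hel
    rcases (halmost (a i) (b i) (fg_isCong F ops (ha i)) (fg_isCong F ops (hb i))
        (l.get t).1 (l.get t).2).mp hsup with ⟨z, h1, h2⟩ | ⟨z, h1, h2⟩
    · exact ⟨z, true, Or.inl ⟨rfl, h1, h2⟩⟩
    · exact ⟨z, false, Or.inr ⟨rfl, h1, h2⟩⟩
  choose z o hzo using key
  set enc : I → Fin (Fintype.card (Fin l.length → Bool)) :=
    fun i => Fintype.equivFin (Fin l.length → Bool) (o i) with henc
  refine ⟨fun w => {i | enc i = w},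
    fun i j => congGen F ops (fun p q => (p, q) ∈ List.ofFn (fun t => (z i t, z j t))),
    fun i j => ⟨_, rfl⟩, fun i => ⟨enc i, rfl⟩, ?_, ?_⟩
  · intro w i hi j hj
    have hoij : o i = o j := (Fintype.equivFin (Fin l.length → Bool)).injective
      (hi.trans hj.symm)
    -- generator membership for c i j
    have hgen : ∀ (i' j' : I) (t : Fin l.length),
        congGen F ops (fun p q => (p, q) ∈ List.ofFn (fun t => (z i' t, z j' t)))
          (z i' t) (z j' t) := by
      intro i' j' t
      refine le_congGen F ops _ _ _ ?_
      simp only [List.mem_ofFn]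
      exact ⟨t, rfl⟩
    refine ⟨?_, ?_, ?_⟩
    · -- c i j ≤ a i ∨ a j
      refine congGen_le F ops _ _ (congSup_isCong F ops _ _) ?_
      intro p q hpq
      simp only [List.mem_ofFn, Set.mem_range] at hpq
      obtain ⟨t, ht⟩ := hpq
      obtain ⟨rfl, rfl⟩ : z i t = p ∧ z j t = q := by
        exact ⟨congrArg Prod.fst ht, congrArg Prod.snd ht⟩
      have hE := (congSup_isCong F ops (a i) (a j)).1
      rcases hzo i t with ⟨hot, h1, h2⟩ | ⟨hot, h1, h2⟩
      · rcases hzo j t with ⟨_, h1', h2'⟩ | ⟨hot', _, _⟩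
        · exact hE.trans (hE.symm (left_le_congSup F ops _ _ _ _ h1))
            (right_le_congSup F ops _ _ _ _ h1')
        · rw [hoij, hot'] at hot; cases hot
      · rcases hzo j t with ⟨hot', _, _⟩ | ⟨_, h1', h2'⟩
        · rw [hoij, hot'] at hot; cases hot
        · exact hE.trans (left_le_congSup F ops _ _ _ _ h2)
            (hE.symm (right_le_congSup F ops _ _ _ _ h2'))
    · -- c i j ≤ b i ∨ b j
      refine congGen_le F ops _ _ (congSup_isCong F ops _ _) ?_
      intro p q hpq
      simp only [List.mem_ofFn, Set.mem_range] at hpq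
      obtain ⟨t, ht⟩ := hpq
      obtain ⟨rfl, rfl⟩ : z i t = p ∧ z j t = q := by
        exact ⟨congrArg Prod.fst ht, congrArg Prod.snd ht⟩
      have hE := (congSup_isCong F ops (b i) (b j)).1
      rcases hzo i t with ⟨hot, h1, h2⟩ | ⟨hot, h1, h2⟩
      · rcases hzo j t with ⟨_, h1', h2'⟩ | ⟨hot', _, _⟩
        · exact hE.trans (left_le_congSup F ops _ _ _ _ h2)
            (hE.symm (right_le_congSup F ops _ _ _ _ h2'))
        · rw [hoij, hot'] at hot; cases hot
      · rcases hzo j t with ⟨hot', _, _⟩ | ⟨_, h1', h2'⟩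
        · rw [hoij, hot'] at hot; cases hot
        · exact hE.trans (hE.symm (left_le_congSup F ops _ _ _ _ h1))
            (right_le_congSup F ops _ _ _ _ h1')
    · -- e ≤ (a j ∨ b i) ∨ c i j
      refine congGen_le F ops _ _ (congSup_isCong F ops _ _) ?_
      intro p q hpq
      obtain ⟨t, ht⟩ := List.mem_iff_get.mp hpq
      have hp : (l.get t).1 = p := by rw [ht]
      have hq : (l.get t).2 = q := by rw [ht]
      subst hp; subst hq
      have hE := (congSup_isCong F ops (congSup F ops (a j) (b i))
        (congGen F ops (fun p q => (p, q) ∈ List.ofFn (fun t => (z i t, z j t))))).1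
      have haj : ∀ p q, a j p q →
          congSup F ops (congSup F ops (a j) (b i))
            (congGen F ops (fun p q => (p, q) ∈ List.ofFn (fun t => (z i t, z j t)))) p q :=
        fun p q h => left_le_congSup F ops _ _ _ _ (left_le_congSup F ops _ _ _ _ h)
      have hbi : ∀ p q, b i p q →
          congSup F ops (congSup F ops (a j) (b i))
            (congGen F ops (fun p q => (p, q) ∈ List.ofFn (fun t => (z i t, z j t)))) p q :=
        fun p q h => left_le_congSup F ops _ _ _ _ (right_le_congSup F ops _ _ _ _ h)
      have hc := right_le_congSup F ops (congSup F ops (a j) (b i))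
          (congGen F ops (fun p q => (p, q) ∈ List.ofFn (fun t => (z i t, z j t))))
          (z i t) (z j t) (hgen i j t)
      rcases hzo i t with ⟨hot, h1, h2⟩ | ⟨hot, h1, h2⟩
      · rcases hzo j t with ⟨_, h1', h2'⟩ | ⟨hot', _, _⟩
        · exact hE.trans (haj _ _ h1') (hE.trans (hE.symm hc) (hbi _ _ h2))
        · rw [hoij, hot'] at hot; cases hot
      · rcases hzo j t with ⟨hot', _, _⟩ | ⟨_, h1', h2'⟩
        · rw [hoij, hot'] at hot; cases hot
        · exact hE.trans (hbi _ _ h1) (hE.trans hc (haj _ _ h2'))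
  · -- cocycle condition
    intro i j k
    refine congGen_le F ops _ _ (congSup_isCong F ops _ _) ?_
    intro p q hpq
    simp only [List.mem_ofFn, Set.mem_range] at hpq
    obtain ⟨t, ht⟩ := hpq
    obtain ⟨rfl, rfl⟩ : z i t = p ∧ z k t = q :=
      ⟨congrArg Prod.fst ht, congrArg Prod.snd ht⟩
    have hE := (congSup_isCong F ops
      (congGen F ops (fun p q => (p, q) ∈ List.ofFn (fun t => (z i t, z j t))))
      (congGen F ops (fun p q => (p, q) ∈ List.ofFn (fun t => (z j t, z k t))))).1
    refine hE.trans (left_le_congSup F ops _ _ (z i t) (z j t) ?_)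
      (right_le_congSup F ops _ _ (z j t) (z k t) ?_)
    · refine le_congGen F ops _ _ _ ?_
      simp only [List.mem_ofFn]
      exact ⟨t, rfl⟩
    · refine le_congGen F ops _ _ _ ?_
      simp only [List.mem_ofFn]
      exact ⟨t, rfl⟩


end UniversalAlgebra
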